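/- Let D be a self-adjoint invertible operator on a Hilbert space, 0 < ρ < 1, and f(λ) = λ(1+λ²)^{−ρ/2}. If H is a bounded self-adjoint operator preserving Dom(D) with [D,H] bounded, then H preserves Dom(f(D)) ⊇ Dom(D) and [f(D),H] extends to a bounded operator. -/

import Mathlib

open MeasureTheory Set Real

lemma aux_integrable {s : ℝ} (hs0 : 0 < s) (hs1 : s < 1) :
    IntegrableOn (fun u : ℝ => u ^ (-s) * (1 + u)⁻¹) (Ioi 0) := by
  have hmeas : ∀ S : Set ℝ, S ⊆ Ioi 0 → MeasurableSet S →
      AEStronglyMeasurable (fun u : ℝ => u ^ (-s) * (1 + u)⁻¹) (volume.restrict S) := by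
    intro S hS hSm
    refine ContinuousOn.aestronglyMeasurable ?_ hSm
    intro u hu
    have hu0 : (0:ℝ) < u := hS hu
    exact (((Real.continuousAt_rpow_const u (-s) (Or.inl hu0.ne')).continuousWithinAt).mul
      (((continuous_const.add continuous_id).continuousWithinAt).inv₀ (by show (1:ℝ) + u ≠ 0; nlinarith)))
  have h1 : IntegrableOn (fun u : ℝ => u ^ (-s) * (1 + u)⁻¹) (Ioc 0 1) := by
    have hint : IntegrableOn (fun u : ℝ => u ^ (-s)) (Ioc 0 1) := by
      have := intervalIntegral.intervalIntegrable_rpow' (a := 0) (b := 1) (r := -s) (by linarith)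
      rwa [intervalIntegrable_iff_integrableOn_Ioc_of_le (by norm_num)] at this
    refine hint.mono' (hmeas _ Ioc_subset_Ioi_self measurableSet_Ioc) ?_
    filter_upwards [ae_restrict_mem measurableSet_Ioc] with u hu
    have hu0 : (0:ℝ) < u := hu.1
    have h1u : (0:ℝ) < 1 + u := by linarith
    rw [norm_mul, norm_eq_abs, norm_eq_abs, abs_of_nonneg (rpow_nonneg hu0.le _),
      abs_of_nonneg (inv_nonneg.mpr h1u.le)]
    nth_rewrite 2 [← mul_one (u ^ (-s))]
    gcongr
    rw [inv_le_one_iff₀]; right; linarith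
  have h2 : IntegrableOn (fun u : ℝ => u ^ (-s) * (1 + u)⁻¹) (Ioi 1) := by
    have hint : IntegrableOn (fun u : ℝ => u ^ (-s - 1)) (Ioi 1) :=
      integrableOn_Ioi_rpow_of_lt (by linarith) one_pos
    refine hint.mono' (hmeas _ (fun u hu => mem_Ioi.mpr (lt_trans one_pos (mem_Ioi.mp hu))) measurableSet_Ioi) ?_
    filter_upwards [ae_restrict_mem measurableSet_Ioi] with u hu
    have hu0 : (0:ℝ) < u := lt_trans one_pos hu
    have h1u : (0:ℝ) < 1 + u := by linarith
    rw [norm_mul, norm_eq_abs, norm_eq_abs, abs_of_nonneg (rpow_nonneg hu0.le _),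
      abs_of_nonneg (inv_nonneg.mpr h1u.le), rpow_sub hu0, rpow_one, div_eq_mul_inv]
    have hinv : (1 + u)⁻¹ ≤ u⁻¹ := by
      apply inv_anti₀ hu0; linarith
    exact mul_le_mul_of_nonneg_left hinv (rpow_nonneg hu0.le _)
  have : Ioi (0:ℝ) = Ioc 0 1 ∪ Ioi 1 := by
    rw [Ioc_union_Ioi_eq_Ioi]; norm_num
  rw [this]
  exact h1.union h2

lemma aux_pos {s : ℝ} (hs0 : 0 < s) (hs1 : s < 1) :
    0 < ∫ u in Ioi (0:ℝ), u ^ (-s) * (1 + u)⁻¹ := by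
  refine (setIntegral_pos_iff_support_of_nonneg_ae ?_ (aux_integrable hs0 hs1)).mpr ?_
  · filter_upwards [ae_restrict_mem measurableSet_Ioi] with u hu
    have hu0 : (0:ℝ) < u := hu
    positivity
  · have hsub : Ioi (0:ℝ) ⊆ Function.support (fun u : ℝ => u ^ (-s) * (1 + u)⁻¹) ∩ Ioi 0 := by
      intro u hu
      have hu0 : (0:ℝ) < u := hu
      refine ⟨?_, hu⟩
      simp only [Function.mem_support]
      positivity
    refine lt_of_lt_of_le ?_ (measure_mono hsub)
    simp [Real.volume_Ioi]

lemma aux_subst {s : ℝ} (x : ℝ) :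
    ∫ t in Ioi (0:ℝ), t ^ (-s) * (1 + x ^ 2 + t)⁻¹
      = (1 + x ^ 2) ^ (-s) * ∫ u in Ioi (0:ℝ), u ^ (-s) * (1 + u)⁻¹ := by
  have ha : (0:ℝ) < 1 + x ^ 2 := by positivity
  set a : ℝ := 1 + x ^ 2 with ha_def
  have h := integral_comp_mul_left_Ioi (fun t : ℝ => t ^ (-s) * (a + t)⁻¹) 0 ha
  rw [mul_zero] at h
  have hcongr : ∫ u in Ioi (0:ℝ), (fun t : ℝ => t ^ (-s) * (a + t)⁻¹) (a * u)
      = ∫ u in Ioi (0:ℝ), (a ^ (-s) * a⁻¹) * (u ^ (-s) * (1 + u)⁻¹) := by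
    refine setIntegral_congr_fun measurableSet_Ioi (fun u hu => ?_)
    have hu0 : (0:ℝ) < u := hu
    simp only
    rw [Real.mul_rpow ha.le hu0.le, show a + a * u = a * (1 + u) by ring, mul_inv]
    ring
  rw [hcongr, MeasureTheory.integral_const_mul] at h
  have := congrArg (fun y : ℝ => a • y) h
  simp only [smul_smul, mul_inv_cancel₀ ha.ne', one_smul, smul_eq_mul] at this
  rw [show (a:ℝ) * (a⁻¹ * ∫ x in Ioi (0:ℝ), x ^ (-s) * (a + x)⁻¹)
      = ∫ x in Ioi (0:ℝ), x ^ (-s) * (a + x)⁻¹ by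
    rw [← mul_assoc, mul_inv_cancel₀ ha.ne', one_mul]] at this
  rw [← this, mul_comm (a ^ (-s)) a⁻¹, ← mul_assoc, ← mul_assoc,
    mul_inv_cancel₀ ha.ne', one_mul]

section Op
variable {E : Type} [NormedAddCommGroup E] [InnerProductSpace ℂ E] [CompleteSpace E]

lemma comm_bound (D H : E →L[ℂ] E) (hD : IsSelfAdjoint D) (t : ℝ) (ht : 0 ≤ t) :
    ‖cfc (fun x : ℝ => x * (1 + t + x ^ 2)⁻¹) D * H
      - H * cfc (fun x : ℝ => x * (1 + t + x ^ 2)⁻¹) D‖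
      ≤ 9 / 4 * (1 + t)⁻¹ * ‖D * H - H * D‖ := by
  have hden : ∀ x : ℝ, (0:ℝ) < 1 + t + x ^ 2 := fun x => by positivity
  have h1t : (0:ℝ) < 1 + t := by linarith
  have hrc : Continuous (fun x : ℝ => (1 + t + x ^ 2)⁻¹) :=
    ((continuous_const.add (continuous_pow 2)).inv₀ (fun x => (hden x).ne'))
  have hgc : Continuous (fun x : ℝ => x * (1 + t + x ^ 2)⁻¹) := continuous_id.mul hrc
  set R : E →L[ℂ] E := cfc (fun x : ℝ => (1 + t + x ^ 2)⁻¹) D with hR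
  set G : E →L[ℂ] E := cfc (fun x : ℝ => x * (1 + t + x ^ 2)⁻¹) D with hG
  set B : E →L[ℂ] E := D * H - H * D with hB
  have hGR : G = D * R := by
    rw [hG, cfc_mul (fun x : ℝ => x) (fun x : ℝ => (1 + t + x ^ 2)⁻¹) D
      continuous_id.continuousOn hrc.continuousOn, cfc_id' ℝ D]
  have hRD' : cfc (fun x : ℝ => (1 + t + x ^ 2)⁻¹ * x) D = R * D := by
    rw [hR, cfc_mul (fun x : ℝ => (1 + t + x ^ 2)⁻¹) (fun x : ℝ => x) D
      hrc.continuousOn continuous_id.continuousOn, cfc_id' ℝ D]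
  have hRD : D * R = R * D := by
    rw [← hGR, ← hRD']
    exact cfc_congr (fun x _ => mul_comm _ _)
  set P : E →L[ℂ] E := cfc (fun x : ℝ => 1 + t + x ^ 2) D with hPdef
  have hpc : Continuous (fun x : ℝ => 1 + t + x ^ 2) := continuous_const.add (continuous_pow 2)
  have hRP : R * P = 1 := by
    rw [hR, hPdef, ← cfc_mul _ _ D hrc.continuousOn hpc.continuousOn]
    calc cfc (fun x : ℝ => (1 + t + x ^ 2)⁻¹ * (1 + t + x ^ 2)) D
        = cfc (1 : ℝ → ℝ) D := cfc_congr (fun x _ => inv_mul_cancel₀ (hden x).ne')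
      _ = 1 := cfc_one ℝ D
  have hPR : P * R = 1 := by
    rw [hR, hPdef, ← cfc_mul _ _ D hpc.continuousOn hrc.continuousOn]
    calc cfc (fun x : ℝ => (1 + t + x ^ 2) * (1 + t + x ^ 2)⁻¹) D
        = cfc (1 : ℝ → ℝ) D := cfc_congr (fun x _ => mul_inv_cancel₀ (hden x).ne')
      _ = 1 := cfc_one ℝ D
  have hPform : P = (1 + t) • 1 + D * D := by
    rw [hPdef]
    rw [show (fun x : ℝ => 1 + t + x ^ 2) = fun x : ℝ => (1 + t) + x * x by funext x; ring]
    rw [cfc_add (a := D) (fun _ : ℝ => 1 + t) (fun x : ℝ => x * x)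
      continuous_const.continuousOn (continuous_id.mul continuous_id).continuousOn,
      cfc_mul (fun x : ℝ => x) (fun x : ℝ => x) D
      continuous_id.continuousOn continuous_id.continuousOn, cfc_id' ℝ D,
      cfc_const (1 + t) D, Algebra.algebraMap_eq_smul_one]
  have hPH : H * P - P * H = -(D * B + B * D) := by
    rw [hPform, hB]
    simp only [smul_mul_assoc, mul_smul_comm, add_mul, mul_add, one_mul, mul_one]
    noncomm_ring
  have hRH : R * H - H * R = -(R * (D * B + B * D) * R) := by
    have expand : R * (H * P - P * H) * R = R * H * (P * R) - R * P * (H * R) := by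
      noncomm_ring
    have key : R * (H * P - P * H) * R = R * H - H * R := by
      rw [expand, hPR, hRP, mul_one, one_mul]
    rw [← key, hPH]
    noncomm_ring
  have hmain : G * H - H * G = B * R - (D * D * R) * (B * R) - (D * R) * (B * (D * R)) := by
    have e0 : G * H - H * G = D * (R * H - H * R) + B * R := by
      rw [hGR, hB]; noncomm_ring
    have hDRD : D * R * D = D * D * R := by
      rw [mul_assoc, ← hRD, ← mul_assoc]
    rw [e0, hRH]
    have e1 : D * -(R * (D * B + B * D) * R)
        = -((D * R * D) * (B * R)) - (D * R) * (B * (D * R)) := by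
      noncomm_ring
    rw [e1, hDRD]
    noncomm_ring
  -- norm bounds
  have hnR : ‖R‖ ≤ (1 + t)⁻¹ := by
    refine norm_cfc_le (by positivity) (fun x _ => ?_)
    rw [Real.norm_eq_abs, abs_of_nonneg (inv_nonneg.mpr (hden x).le)]
    exact inv_anti₀ h1t (by nlinarith)
  have hsq : Real.sqrt (1 + t) ^ 2 = 1 + t := Real.sq_sqrt h1t.le
  have hsqpos : 0 < Real.sqrt (1 + t) := Real.sqrt_pos.mpr h1t
  have hnG : ‖G‖ ≤ (2 * Real.sqrt (1 + t))⁻¹ := by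
    refine norm_cfc_le (by positivity) (fun x _ => ?_)
    rw [Real.norm_eq_abs, abs_mul, abs_of_nonneg (inv_nonneg.mpr (hden x).le),
      ← div_eq_mul_inv, inv_eq_one_div, div_le_div_iff₀ (hden x) (by positivity), one_mul]
    nlinarith [sq_nonneg (Real.sqrt (1 + t) - |x|), sq_abs x]
  have hnDDR : ‖D * D * R‖ ≤ 1 := by
    have : D * D * R = cfc (fun x : ℝ => x * (x * (1 + t + x ^ 2)⁻¹)) D := by
      rw [cfc_mul (fun x : ℝ => x) (fun x : ℝ => x * (1 + t + x ^ 2)⁻¹) D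
        continuous_id.continuousOn hgc.continuousOn, cfc_id' ℝ D, ← hG, hGR, ← mul_assoc]
    rw [this]
    refine norm_cfc_le zero_le_one (fun x _ => ?_)
    rw [Real.norm_eq_abs, show x * (x * (1 + t + x ^ 2)⁻¹) = x ^ 2 * (1 + t + x ^ 2)⁻¹ by ring,
      abs_mul, abs_of_nonneg (sq_nonneg x), abs_of_nonneg (inv_nonneg.mpr (hden x).le),
      ← div_eq_mul_inv, div_le_one (hden x)]
    nlinarith
  -- assemble
  have hBR : ‖B * R‖ ≤ ‖B‖ * (1 + t)⁻¹ :=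
    le_trans (norm_mul_le _ _) (by gcongr)
  have h2 : ‖(D * D * R) * (B * R)‖ ≤ 1 * (‖B‖ * (1 + t)⁻¹) :=
    le_trans (norm_mul_le _ _) (by gcongr)
  have h3 : ‖(D * R) * (B * (D * R))‖ ≤ (2 * Real.sqrt (1 + t))⁻¹ * (‖B‖ * (2 * Real.sqrt (1 + t))⁻¹) := by
    refine le_trans (norm_mul_le _ _) (le_trans
      (mul_le_mul_of_nonneg_left (norm_mul_le _ _) (norm_nonneg _)) ?_)
    rw [← hGR]
    gcongr
  have hsqinv : (2 * Real.sqrt (1 + t))⁻¹ * (2 * Real.sqrt (1 + t))⁻¹ = (4 * (1 + t))⁻¹ := by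
    rw [← mul_inv]
    congr 1
    linear_combination 4 * hsq
  calc ‖G * H - H * G‖ ≤ ‖B * R‖ + ‖(D * D * R) * (B * R)‖ + ‖(D * R) * (B * (D * R))‖ := by
        rw [hmain]
        refine le_trans (norm_sub_le _ _) ?_
        gcongr
        exact norm_sub_le _ _
    _ ≤ ‖B‖ * (1 + t)⁻¹ + 1 * (‖B‖ * (1 + t)⁻¹)
        + (2 * Real.sqrt (1 + t))⁻¹ * (‖B‖ * (2 * Real.sqrt (1 + t))⁻¹) := by
        gcongr
    _ = ‖B‖ * (1 + t)⁻¹ + ‖B‖ * (1 + t)⁻¹ + ‖B‖ * (4 * (1 + t))⁻¹ := by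
        rw [one_mul]
        congr 1
        rw [show (2 * Real.sqrt (1 + t))⁻¹ * (‖B‖ * (2 * Real.sqrt (1 + t))⁻¹)
          = ‖B‖ * ((2 * Real.sqrt (1 + t))⁻¹ * (2 * Real.sqrt (1 + t))⁻¹) by ring, hsqinv]
    _ = 9 / 4 * (1 + t)⁻¹ * ‖B‖ := by
        rw [mul_inv]
        ring

end Op

section IntRep
variable {E : Type} [NormedAddCommGroup E] [InnerProductSpace ℂ E] [CompleteSpace E]

set_option maxHeartbeats 1000000 in
lemma cfc_integral_rep {s : ℝ} (hs0 : 0 < s) (hs1 : s < 1)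
    (hint : IntegrableOn (fun u : ℝ => u ^ (-s) * (1 + u)⁻¹) (Ioi 0))
    (hsubst : ∀ x : ℝ, ∫ t in Ioi (0:ℝ), t ^ (-s) * (1 + x ^ 2 + t)⁻¹
      = (1 + x ^ 2) ^ (-s) * ∫ u in Ioi (0:ℝ), u ^ (-s) * (1 + u)⁻¹)
    (D : E →L[ℂ] E) (hD : IsSelfAdjoint D) :
    (∫ u in Ioi (0:ℝ), u ^ (-s) * (1 + u)⁻¹) • cfc (fun x : ℝ => x * (1 + x ^ 2) ^ (-s)) D
      = ∫ t in Ioi (0:ℝ), cfc (fun x : ℝ => t ^ (-s) * (x * (1 + |t| + x ^ 2)⁻¹)) D ∧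
    Integrable (fun t : ℝ => cfc (fun x : ℝ => t ^ (-s) * (x * (1 + |t| + x ^ 2)⁻¹)) D)
      (volume.restrict (Ioi 0)) := by
  set M : ℝ := ‖D‖ * ‖(1 : E →L[ℂ] E)‖ with hM
  have hMnn : 0 ≤ M := by positivity
  have hxM : ∀ x : spectrum ℝ D, |x.1| ≤ M := fun x => by
    simpa [Real.norm_eq_abs] using spectrum.norm_le_norm_mul_of_mem x.2
  have hdenK : ∀ (t : ℝ) (x : ℝ), (0:ℝ) < 1 + |t| + x ^ 2 := fun t x => by positivity
  -- the continuous family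
  have hF1cont : Continuous (fun p : ℝ × spectrum ℝ D => (p.2.1 : ℝ) * (1 + |p.1| + (p.2.1 : ℝ) ^ 2)⁻¹) := by
    have hval : Continuous (fun p : ℝ × spectrum ℝ D => (p.2.1 : ℝ)) :=
      continuous_subtype_val.comp continuous_snd
    refine hval.mul (Continuous.inv₀ ?_ (fun p => by positivity))
    exact (continuous_const.add (continuous_abs.comp continuous_fst)).add (hval.pow 2)
  set F1 : C(ℝ × spectrum ℝ D, ℝ) :=
    ⟨fun p : ℝ × spectrum ℝ D => (p.2.1 : ℝ) * (1 + |p.1| + (p.2.1 : ℝ) ^ 2)⁻¹, hF1cont⟩ with hF1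
  set h : ℝ → C(spectrum ℝ D, ℝ) := fun t => t ^ (-s) • F1.curry t with hh
  -- measurability
  have hmeas : AEStronglyMeasurable h (volume.restrict (Ioi 0)) := by
    refine AEStronglyMeasurable.smul (𝕜 := ℝ) (f := fun t : ℝ => t ^ (-s)) ?_ ?_
    · refine ContinuousOn.aestronglyMeasurable (fun t ht => ?_) measurableSet_Ioi
      exact (Real.continuousAt_rpow_const t (-s) (Or.inl (ne_of_gt ht))).continuousWithinAt
    · exact (map_continuous F1.curry).aestronglyMeasurable
  -- norm bound
  have hhbound : ∀ t ∈ Ioi (0:ℝ), ‖h t‖ ≤ M * (t ^ (-s) * (1 + t)⁻¹) := by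
    intro t ht
    have ht0 : (0:ℝ) < t := ht
    have htrp : (0:ℝ) ≤ t ^ (-s) := rpow_nonneg ht0.le _
    refine (ContinuousMap.norm_le _ (by positivity)).mpr (fun x => ?_)
    have hx := hxM x
    rw [hh]
    simp only [ContinuousMap.smul_apply, ContinuousMap.curry_apply, hF1,
      ContinuousMap.coe_mk, smul_eq_mul]
    rw [Real.norm_eq_abs, abs_mul, abs_of_nonneg htrp, abs_mul,
      abs_of_nonneg (inv_nonneg.mpr (hdenK t x.1).le)]
    have h1 : |(x.1 : ℝ)| ≤ M := hx
    have h2 : (1 + |t| + (x.1:ℝ) ^ 2)⁻¹ ≤ (1 + t)⁻¹ := by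
      apply inv_anti₀ (by positivity)
      rw [abs_of_nonneg ht0.le]
      nlinarith [sq_nonneg (x.1 : ℝ)]
    calc t ^ (-s) * (|(x.1:ℝ)| * (1 + |t| + (x.1:ℝ) ^ 2)⁻¹)
        ≤ t ^ (-s) * (M * (1 + t)⁻¹) :=
          mul_le_mul_of_nonneg_left (mul_le_mul h1 h2 (by positivity) hMnn) htrp
      _ = M * (t ^ (-s) * (1 + t)⁻¹) := by ring
  -- integrability
  have hInt : Integrable h (volume.restrict (Ioi 0)) := by
    refine Integrable.mono' (hint.const_mul M) hmeas ?_
    filter_upwards [ae_restrict_mem measurableSet_Ioi] with t ht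
    simpa [mul_assoc] using hhbound t ht
  -- the cfcHom as a continuous linear map
  set L : C(spectrum ℝ D, ℝ) →L[ℝ] (E →L[ℂ] E) :=
    { toLinearMap := (cfcHom hD (R := ℝ)).toLinearMap,
      cont := (cfcHom_isClosedEmbedding hD).continuous } with hL
  have hLapp : ∀ g : C(spectrum ℝ D, ℝ), L g = cfcHom hD g := fun g => rfl
  -- identify the integral of h
  have hfcont : ContinuousOn (fun x : ℝ => x * (1 + x ^ 2) ^ (-s)) (spectrum ℝ D) := by
    refine Continuous.continuousOn (continuous_id.mul ?_)
    refine Continuous.rpow_const (continuous_const.add (continuous_pow 2)) (fun x => ?_)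
    left; positivity
  have hIntEq : ∫ t in Ioi (0:ℝ), h t
      = (∫ u in Ioi (0:ℝ), u ^ (-s) * (1 + u)⁻¹) • (⟨_, hfcont.restrict⟩ : C(spectrum ℝ D, ℝ)) := by
    ext x
    have hev := (ContinuousMap.evalCLM ℝ x).integral_comp_comm hInt
    have hev' : (∫ t in Ioi (0:ℝ), h t) x = ∫ t in Ioi (0:ℝ), (h t) x := by
      exact hev.symm
    rw [hev']
    have hcongr : ∫ t in Ioi (0:ℝ), (h t) x
        = ∫ t in Ioi (0:ℝ), (x.1 : ℝ) * (t ^ (-s) * (1 + x.1 ^ 2 + t)⁻¹) := by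
      refine setIntegral_congr_fun measurableSet_Ioi (fun t ht => ?_)
      have ht0 : (0:ℝ) < t := ht
      rw [hh]
      simp only [ContinuousMap.smul_apply, ContinuousMap.curry_apply, hF1,
        ContinuousMap.coe_mk, smul_eq_mul]
      rw [abs_of_nonneg ht0.le]
      ring_nf
    rw [hcongr, MeasureTheory.integral_const_mul, hsubst x.1]
    simp only [ContinuousMap.smul_apply, ContinuousMap.coe_mk, smul_eq_mul, Set.restrict_apply]
    ring
  -- move L through the integral
  have hcomm := L.integral_comp_comm hInt
  rw [hIntEq] at hcomm
  rw [L.map_smul] at hcomm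
  -- identify both sides
  have hLf : L ⟨_, hfcont.restrict⟩ = cfc (fun x : ℝ => x * (1 + x ^ 2) ^ (-s)) D := by
    rw [hLapp, ← cfc_apply (fun x : ℝ => x * (1 + x ^ 2) ^ (-s)) D hD hfcont]
  have hLh : ∀ t ∈ Ioi (0:ℝ),
      L (h t) = cfc (fun x : ℝ => t ^ (-s) * (x * (1 + |t| + x ^ 2)⁻¹)) D := by
    intro t ht
    have hgcont : ContinuousOn (fun x : ℝ => t ^ (-s) * (x * (1 + |t| + x ^ 2)⁻¹)) (spectrum ℝ D) := by
      refine Continuous.continuousOn (continuous_const.mul (continuous_id.mul ?_))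
      exact Continuous.inv₀ (by fun_prop) (fun x => (hdenK t x).ne')
    rw [hLapp, cfc_apply _ D hD hgcont]
    congr 1
  have hInt2 : Integrable (fun t : ℝ => cfc (fun x : ℝ => t ^ (-s) * (x * (1 + |t| + x ^ 2)⁻¹)) D)
      (volume.restrict (Ioi 0)) := by
    refine (L.integrable_comp hInt).congr ?_
    filter_upwards [ae_restrict_mem measurableSet_Ioi] with t ht
    exact hLh t ht
  refine ⟨?_, hInt2⟩
  rw [hLf] at hcomm
  rw [← hcomm]
  exact setIntegral_congr_fun measurableSet_Ioi (fun t ht => hLh t ht)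

end IntRep

/-- Lipschitz regularization of the Dirac operator: for `0 < ρ < 1` and
`f(λ) = λ(1+λ²)^{-ρ/2}`, there is a constant `K` (depending only on `ρ`) such that
for any self-adjoint invertible operator `D` and any self-adjoint `H`,
`‖[f(D), H]‖ ≤ K ‖[D,H]‖`; in particular any `D`-differentiable `H` is
`f(D)`-differentiable. -/
theorem stmt_9 (ρ : ℝ) (hρ0 : 0 < ρ) (hρ1 : ρ < 1) :
    ∃ K : ℝ, 0 < K ∧
      ∀ (E : Type) (_ : NormedAddCommGroup E) (_ : InnerProductSpace ℂ E)
        (_ : CompleteSpace E) (D H : E →L[ℂ] E),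
        IsSelfAdjoint D → IsUnit D → IsSelfAdjoint H →
        ‖cfc (fun x : ℝ => x * (1 + x ^ 2) ^ (-(ρ / 2)) : ℝ → ℝ) D * H
            - H * cfc (fun x : ℝ => x * (1 + x ^ 2) ^ (-(ρ / 2)) : ℝ → ℝ) D‖
          ≤ K * ‖D * H - H * D‖ := by
  refine ⟨9 / 4, by norm_num, ?_⟩
  intro E _ _ _ D H hD _ _
  have hs0 : 0 < ρ / 2 := by linarith
  have hs1 : ρ / 2 < 1 := by linarith
  obtain ⟨hrep, hInt2⟩ :=
    cfc_integral_rep (E := E) hs0 hs1 (aux_integrable hs0 hs1) (fun x => aux_subst x) D hD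
  have hC : 0 < ∫ u in Set.Ioi (0:ℝ), u ^ (-(ρ / 2)) * (1 + u)⁻¹ := aux_pos hs0 hs1
  set C : ℝ := ∫ u in Set.Ioi (0:ℝ), u ^ (-(ρ / 2)) * (1 + u)⁻¹ with hCdef
  set Ψ : (E →L[ℂ] E) →L[ℂ] (E →L[ℂ] E) :=
    (ContinuousLinearMap.mul ℂ (E →L[ℂ] E)).flip H
      - ContinuousLinearMap.mul ℂ (E →L[ℂ] E) H with hΨ
  have hΨapp : ∀ X : E →L[ℂ] E, Ψ X = X * H - H * X := fun X => rfl
  have hcomm := Ψ.integral_comp_comm hInt2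
  rw [← hrep, Ψ.map_smul_of_tower] at hcomm
  set B : E →L[ℂ] E := D * H - H * D with hB
  -- a.e. bound on the integrand
  have hbd : ∀ t ∈ Set.Ioi (0:ℝ),
      ‖Ψ (cfc (fun x : ℝ => t ^ (-(ρ / 2)) * (x * (1 + |t| + x ^ 2)⁻¹)) D)‖
        ≤ (9 / 4 * ‖B‖) * (t ^ (-(ρ / 2)) * (1 + t)⁻¹) := by
    intro t ht
    have ht0 : (0:ℝ) < t := ht
    have hdenc : Continuous (fun x : ℝ => x * (1 + |t| + x ^ 2)⁻¹) := by
      refine continuous_id.mul (Continuous.inv₀ (by fun_prop) (fun x => ?_))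
      positivity
    rw [cfc_const_mul (t ^ (-(ρ / 2))) (fun x : ℝ => x * (1 + |t| + x ^ 2)⁻¹) D
        hdenc.continuousOn, Ψ.map_smul_of_tower, norm_smul, Real.norm_eq_abs,
      abs_of_nonneg (Real.rpow_nonneg ht0.le _), hΨapp]
    have hcb := comm_bound D H hD |t| (abs_nonneg t)
    rw [abs_of_pos ht0] at hcb
    rw [abs_of_pos ht0]
    calc t ^ (-(ρ / 2)) * ‖cfc (fun x : ℝ => x * (1 + t + x ^ 2)⁻¹) D * H
          - H * cfc (fun x : ℝ => x * (1 + t + x ^ 2)⁻¹) D‖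
        ≤ t ^ (-(ρ / 2)) * (9 / 4 * (1 + t)⁻¹ * ‖B‖) := by
          refine mul_le_mul_of_nonneg_left ?_ (Real.rpow_nonneg ht0.le _)
          rw [hB]
          exact hcb
      _ = (9 / 4 * ‖B‖) * (t ^ (-(ρ / 2)) * (1 + t)⁻¹) := by ring
  -- integral bound
  have hnorm : ‖C • Ψ (cfc (fun x : ℝ => x * (1 + x ^ 2) ^ (-(ρ / 2))) D)‖
      ≤ (9 / 4 * ‖B‖) * C := by
    rw [← hcomm]
    have hIb : Integrable (fun t : ℝ => (9 / 4 * ‖B‖) * (t ^ (-(ρ / 2)) * (1 + t)⁻¹))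
        (volume.restrict (Set.Ioi 0)) := (aux_integrable hs0 hs1).const_mul _
    refine le_trans (norm_integral_le_of_norm_le hIb ?_) ?_
    · filter_upwards [ae_restrict_mem measurableSet_Ioi] with t ht
      exact hbd t ht
    · rw [MeasureTheory.integral_const_mul]
  rw [norm_smul, Real.norm_eq_abs, abs_of_pos hC, hΨapp] at hnorm
  rw [show (9 / 4 * ‖B‖) * C = C * (9 / 4 * ‖B‖) from mul_comm _ _, ← mul_assoc] at hnorm
  exact le_of_mul_le_mul_left (by rw [mul_assoc] at hnorm; exact hnorm) hC
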